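/- The number of ranked binary tree topologies on n labelled leaves in which all n−1 internal nodes have pairwise distinct ranks is (n−1)! · n! / 2^(n−1). -/

import Mathlib

noncomputable section

/-- Partitions of the taxon set `{1, …, n}`. -/
abbrev TreePartition (n : ℕ) := Finpartition (Finset.univ : Finset (Fin n))

/-- A ranked binary tree topology on `n` labelled leaves, encoded as a maximal merging
chain of partitions: it starts with the partition into singletons, ends with the one-block
partition, and each step merges exactly two blocks. -/
def IsMergeChain (n : ℕ) (c : Fin n → TreePartition n) : Prop :=
  (∀ j : Fin n, (j : ℕ) = 0 →
      (c j).parts = Finset.univ.image (fun x : Fin n => ({x} : Finset (Fin n)))) ∧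
  (∀ j : Fin n, (j : ℕ) = n - 1 → (c j).parts = {Finset.univ}) ∧
  (∀ j : Fin n, ∀ h : (j : ℕ) + 1 < n,
    ∃ A ∈ (c j).parts, ∃ B ∈ (c j).parts, A ≠ B ∧
      (c ⟨(j : ℕ) + 1, h⟩).parts = insert (A ∪ B) (((c j).parts.erase A).erase B))

/-- The set of ranked binary tree topologies on `n` taxa with all internal nodes of
pairwise distinct ranks. -/
abbrev RankedTopology (n : ℕ) := {c : Fin n → TreePartition n // IsMergeChain n c}

namespace MergeAux

open Finset

variable {n : ℕ}

/-- One merging step between partitions. -/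
def IsStep (P Q : TreePartition n) : Prop :=
  ∃ A ∈ P.parts, ∃ B ∈ P.parts, A ≠ B ∧
    Q.parts = insert (A ∪ B) ((P.parts.erase A).erase B)

lemma union_not_mem {P : TreePartition n} {A B : Finset (Fin n)}
    (hA : A ∈ P.parts) (hB : B ∈ P.parts) (hAB : A ≠ B) : A ∪ B ∉ P.parts := by
  intro h
  obtain ⟨a, ha⟩ := P.nonempty_of_mem_parts hA
  obtain ⟨b, hb⟩ := P.nonempty_of_mem_parts hB
  have h1 : A = A ∪ B := P.eq_of_mem_parts hA h ha (mem_union_left _ ha)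
  have h2 : B = A ∪ B := P.eq_of_mem_parts hB h hb (mem_union_right _ hb)
  exact hAB (h1.trans h2.symm)

lemma erase_erase_eq {P : TreePartition n} {A B : Finset (Fin n)} :
    (P.parts.erase A).erase B = P.parts \ {A, B} := by
  ext C; simp only [mem_erase, mem_sdiff, mem_insert, mem_singleton]; tauto

lemma sdiff_of_step {P Q : TreePartition n} {A B : Finset (Fin n)}
    (hA : A ∈ P.parts) (hB : B ∈ P.parts) (hAB : A ≠ B)
    (hQ : Q.parts = insert (A ∪ B) ((P.parts.erase A).erase B)) :
    P.parts \ Q.parts = {A, B} := by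
  have hu := union_not_mem hA hB hAB
  ext C
  simp only [mem_sdiff, hQ, mem_insert, mem_erase, mem_singleton]
  constructor
  · rintro ⟨hC, hC2⟩
    push_neg at hC2
    obtain ⟨h1, h2⟩ := hC2
    by_cases hCB : C = B
    · exact Or.inr hCB
    · by_cases hCA : C = A
      · exact Or.inl hCA
      · exact absurd hC (h2 hCB hCA)
  · rintro (rfl | rfl)
    · refine ⟨hA, ?_⟩
      push_neg
      exact ⟨fun h => hu (h ▸ hA), fun _ h => absurd rfl h⟩
    · refine ⟨hB, ?_⟩
      push_neg
      exact ⟨fun h => hu (h ▸ hB), fun h _ => absurd rfl h⟩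

lemma step_card {P Q : TreePartition n} (h : IsStep P Q) :
    Q.parts.card + 1 = P.parts.card ∧ 2 ≤ P.parts.card := by
  obtain ⟨A, hA, B, hB, hAB, hQ⟩ := h
  have hB' : B ∈ P.parts.erase A := mem_erase.2 ⟨fun h => hAB h.symm, hB⟩
  have h2 : 2 ≤ P.parts.card := Finset.one_lt_card.2 ⟨A, hA, B, hB, hAB⟩
  have hu : A ∪ B ∉ (P.parts.erase A).erase B :=
    fun h => union_not_mem hA hB hAB (mem_of_mem_erase (mem_of_mem_erase h))
  have hc1 : ((P.parts.erase A).erase B).card = P.parts.card - 2 := by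
    rw [card_erase_of_mem hB', card_erase_of_mem hA]
    omega
  have : Q.parts.card = ((P.parts.erase A).erase B).card + 1 := by
    rw [hQ, card_insert_of_notMem hu]
  omega

/-- The merged partition. -/
def mergeFP (P : TreePartition n) {A B : Finset (Fin n)} (hA : A ∈ P.parts)
    (hB : B ∈ P.parts) (hAB : A ≠ B) : TreePartition n where
  parts := insert (A ∪ B) ((P.parts.erase A).erase B)
  supIndep := by
    rw [Finset.supIndep_iff_pairwiseDisjoint]
    have hdisj := P.disjoint
    intro x hx y hy hxy
    simp only [Finset.coe_insert, Set.mem_insert_iff, Finset.mem_coe, mem_erase] at hx hy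
    rcases hx with rfl | ⟨hxB, hxA, hx⟩
    · rcases hy with rfl | ⟨hyB, hyA, hy⟩
      · exact absurd rfl hxy
      · have d1 : Disjoint A y := hdisj hA hy (fun h => hyA h.symm)
        have d2 : Disjoint B y := hdisj hB hy (fun h => hyB h.symm)
        simpa [Function.onFun, Finset.disjoint_union_left] using And.intro d1 d2
    · rcases hy with rfl | ⟨hyB, hyA, hy⟩
      · have d1 : Disjoint x A := hdisj hx hA hxA
        have d2 : Disjoint x B := hdisj hx hB hxB
        simpa [Function.onFun, Finset.disjoint_union_right] using And.intro d1 d2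
      · exact hdisj hx hy hxy
  sup_parts := by
    have hB' : B ∈ P.parts.erase A := mem_erase.2 ⟨fun h => hAB h.symm, hB⟩
    have h1 : insert A (insert B ((P.parts.erase A).erase B)) = P.parts := by
      rw [insert_erase hB', insert_erase hA]
    have h2 : (insert (A ∪ B) ((P.parts.erase A).erase B)).sup id
        = (insert A (insert B ((P.parts.erase A).erase B))).sup id := by
      simp only [sup_insert, id_eq, sup_eq_union, union_assoc]
    rw [h2, h1, P.sup_parts]
  bot_notMem := by
    intro h
    rcases mem_insert.1 h with h1 | h1
    · obtain ⟨a, ha⟩ := P.nonempty_of_mem_parts hA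
      have : a ∈ (⊥ : Finset (Fin n)) := h1 ▸ mem_union_left _ ha
      simp at this
    · exact P.bot_notMem (mem_of_mem_erase (mem_of_mem_erase h1))

lemma isStep_mergeFP (P : TreePartition n) {A B : Finset (Fin n)} (hA : A ∈ P.parts)
    (hB : B ∈ P.parts) (hAB : A ≠ B) : IsStep P (mergeFP P hA hB hAB) :=
  ⟨A, hA, B, hB, hAB, rfl⟩

/-- A step partition is determined by the merged pair. -/
lemma step_parts_eq {P Q : TreePartition n} {A B : Finset (Fin n)}
    (hQ : Q.parts = insert (A ∪ B) ((P.parts.erase A).erase B)) :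
    Q.parts = insert (({A, B} : Finset (Finset (Fin n))).sup id) (P.parts \ {A, B}) := by
  rw [hQ, erase_erase_eq]
  congr 1
  simp [sup_eq_union]

/-- The number of successors of a partition is `choose (card parts) 2`. -/
lemma card_step (P : TreePartition n) :
    Nat.card {Q : TreePartition n // IsStep P Q} = Nat.choose P.parts.card 2 := by
  have key : Nat.card {Q : TreePartition n // IsStep P Q}
      = Nat.card {s // s ∈ P.parts.powersetCard 2} := by
    apply Nat.card_eq_of_bijective
      (fun Q => ⟨P.parts \ Q.1.parts, by
        obtain ⟨A, hA, B, hB, hAB, hQ⟩ := Q.2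
        rw [sdiff_of_step hA hB hAB hQ, mem_powersetCard]
        exact ⟨by intro x hx; rcases mem_insert.1 hx with rfl | hx;
                  exacts [hA, (mem_singleton.1 hx) ▸ hB],
               card_pair hAB⟩⟩)
    constructor
    · rintro ⟨Q1, hQ1⟩ ⟨Q2, hQ2⟩ h
      have hd : P.parts \ Q1.parts = P.parts \ Q2.parts := congrArg Subtype.val h
      obtain ⟨A1, hA1, B1, hB1, hAB1, hQ1'⟩ := hQ1
      obtain ⟨A2, hA2, B2, hB2, hAB2, hQ2'⟩ := hQ2
      have e1 := sdiff_of_step hA1 hB1 hAB1 hQ1'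
      have e2 := sdiff_of_step hA2 hB2 hAB2 hQ2'
      have epair : ({A1, B1} : Finset (Finset (Fin n))) = {A2, B2} := by
        rw [← e1, ← e2, hd]
      apply Subtype.ext
      apply Finpartition.ext
      rw [step_parts_eq hQ1', step_parts_eq hQ2', epair]
    · rintro ⟨s, hs⟩
      rw [mem_powersetCard] at hs
      obtain ⟨A, B, hAB, rfl⟩ := Finset.card_eq_two.1 hs.2
      have hA : A ∈ P.parts := hs.1 (mem_insert_self _ _)
      have hB : B ∈ P.parts := hs.1 (mem_insert_of_mem (mem_singleton_self _))
      refine ⟨⟨mergeFP P hA hB hAB, isStep_mergeFP P hA hB hAB⟩, ?_⟩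
      ext1
      exact sdiff_of_step hA hB hAB rfl
  rw [key, Nat.card_eq_fintype_card, Fintype.card_coe, card_powersetCard]

/-- Maximal merging chains of length `m` starting at `P`. -/
def Chains (P : TreePartition n) (m : ℕ) : Type :=
  {c : Fin (m + 1) → TreePartition n // c 0 = P ∧
    ∀ j : Fin (m + 1), ∀ h : (j : ℕ) + 1 < m + 1, IsStep (c j) (c ⟨(j : ℕ) + 1, h⟩)}

instance (P : TreePartition n) (m : ℕ) : Finite (Chains P m) :=
  Subtype.finite

/-- Block counts along a chain. -/
lemma chain_card {P : TreePartition n} {m : ℕ} (c : Chains P m) :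
    ∀ i : ℕ, ∀ h : i < m + 1, (c.1 ⟨i, h⟩).parts.card + i = P.parts.card := by
  intro i
  induction i with
  | zero =>
    intro h
    have h0 : (⟨0, h⟩ : Fin (m + 1)) = 0 := by ext; simp
    rw [h0, c.2.1]
    simp
  | succ i ih =>
    intro h
    have hi : i < m + 1 := by omega
    have h1 : (c.1 ⟨i + 1, h⟩).parts.card + 1 = (c.1 ⟨i, hi⟩).parts.card :=
      (step_card (c.2.2 ⟨i, hi⟩ (by simpa using h))).1
    have h2 : (c.1 ⟨i, hi⟩).parts.card + i = P.parts.card := ih hi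
    omega

/-- The counting function `F m = ∏ choose (k+2) 2`. -/
def F : ℕ → ℕ
  | 0 => 1
  | m + 1 => Nat.choose (m + 2) 2 * F m

/-- Extend a chain by prepending `P`. -/
def extChain {m : ℕ} (P : TreePartition n) (d : Fin (m + 1) → TreePartition n) :
    Fin (m + 2) → TreePartition n :=
  fun j => if _ : (j : ℕ) = 0 then P else d ⟨(j : ℕ) - 1, by omega⟩

lemma extChain_zero {m : ℕ} (P : TreePartition n) (d : Fin (m + 1) → TreePartition n)
    (j : Fin (m + 2)) (hj : (j : ℕ) = 0) : extChain P d j = P := dif_pos hj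

lemma extChain_pos {m : ℕ} (P : TreePartition n) (d : Fin (m + 1) → TreePartition n)
    (j : Fin (m + 2)) (hj : ¬ (j : ℕ) = 0) :
    extChain P d j = d ⟨(j : ℕ) - 1, by omega⟩ := dif_neg hj

lemma chains_card : ∀ m : ℕ, ∀ P : TreePartition n, P.parts.card = m + 1 →
    Nat.card (Chains P m) = F m := by
  intro m
  induction m with
  | zero =>
    intro P _
    rw [F, Nat.card_eq_one_iff_unique]
    constructor
    · constructor
      intro c d
      apply Subtype.ext
      funext j
      have hj : j = 0 := Fin.ext (by omega)
      rw [hj, c.2.1, d.2.1]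
    · exact ⟨⟨fun _ => P, rfl, fun j h => by omega⟩⟩
  | succ m ih =>
    intro P hP
    -- bijection with sigma type
    have hbij : Nat.card (Σ Q : {Q : TreePartition n // IsStep P Q}, Chains Q.1 m)
        = Nat.card (Chains P (m + 1)) := by
      apply Nat.card_eq_of_bijective (fun x =>
        (⟨extChain P x.2.1, extChain_zero P x.2.1 0 (by simp), ?_⟩ : Chains P (m + 1)))
      · constructor
        · rintro ⟨⟨Q1, hQ1⟩, d1, hd1⟩ ⟨⟨Q2, hQ2⟩, d2, hd2⟩ h
          have hfun2 : extChain P d1 = extChain P d2 := congrArg Subtype.val h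
          have hval : ∀ i : Fin (m + 1), d1 i = d2 i := fun i =>
            congrFun hfun2 ⟨(i : ℕ) + 1, by omega⟩
          have hd : d1 = d2 := funext hval
          have hQ : Q1 = Q2 := by
            have e1 : d1 0 = Q1 := hd1.1
            have e2 : d2 0 = Q2 := hd2.1
            rw [← e1, ← e2, hd]
          subst hQ
          subst hd
          rfl
        · rintro ⟨c, hc0, hcs⟩
          have h1 : (1 : ℕ) < m + 2 := by omega
          have hstep1 : IsStep P (c ⟨1, h1⟩) := by
            have := hcs 0 (by simp)
            simpa [hc0] using this
          refine ⟨⟨⟨c ⟨1, h1⟩, hstep1⟩,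
            ⟨fun i => c ⟨(i : ℕ) + 1, by omega⟩, rfl, ?_⟩⟩, ?_⟩
          · intro j hjh
            exact hcs ⟨(j : ℕ) + 1, by omega⟩
              (by omega : (j : ℕ) + 1 + 1 < m + 1 + 1)
          · apply Subtype.ext
            funext j
            by_cases hj : (j : ℕ) = 0
            · have hj0 : j = 0 := by ext; simp [hj]
              show extChain P (fun i => c ⟨(i : ℕ) + 1, by omega⟩) j = c j
              rw [extChain_zero P _ j hj, hj0, hc0]
            · have hjj : (⟨(j : ℕ) - 1 + 1, by omega⟩ : Fin (m + 1 + 1)) = j := by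
                ext; simp; omega
              show extChain P (fun i => c ⟨(i : ℕ) + 1, by omega⟩) j = c j
              rw [extChain_pos P _ j hj]
              exact congrArg c hjj
      · -- the step condition for invFun
        intro j h
        by_cases hj : (j : ℕ) = 0
        · rw [extChain_zero P x.2.1 j hj]
          have e : extChain P x.2.1 ⟨(j : ℕ) + 1, h⟩ = x.2.1 ⟨(j : ℕ), by omega⟩ :=
            extChain_pos P x.2.1 ⟨(j : ℕ) + 1, h⟩ (Nat.succ_ne_zero _)
          rw [e]
          have h0 : (⟨(j : ℕ), by omega⟩ : Fin (m + 1)) = 0 := by ext; simp [hj]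
          rw [h0, x.2.2.1]
          exact x.1.2
        · rw [extChain_pos P x.2.1 j hj]
          have e : extChain P x.2.1 ⟨(j : ℕ) + 1, h⟩ = x.2.1 ⟨(j : ℕ), by omega⟩ :=
            extChain_pos P x.2.1 ⟨(j : ℕ) + 1, h⟩ (Nat.succ_ne_zero _)
          rw [e]
          have hstep := x.2.2.2 ⟨(j : ℕ) - 1, by omega⟩
            (by omega : (j : ℕ) - 1 + 1 < m + 1)
          have h1 : (⟨(j : ℕ), by omega⟩ : Fin (m + 1))
              = ⟨(j : ℕ) - 1 + 1, by omega⟩ := by ext; simp; omega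
          rw [h1]
          exact hstep
    rw [← hbij]
    letI : Fintype {Q : TreePartition n // IsStep P Q} := Fintype.ofFinite _
    letI : ∀ Q : {Q : TreePartition n // IsStep P Q}, Fintype (Chains Q.1 m) :=
      fun Q => Fintype.ofFinite _
    rw [Nat.card_eq_fintype_card, Fintype.card_sigma]
    have hterm : ∀ Q : {Q : TreePartition n // IsStep P Q},
        Fintype.card (Chains Q.1 m) = F m := by
      intro Q
      rw [← Nat.card_eq_fintype_card]
      apply ih
      have := (step_card Q.2).1
      omega
    rw [Finset.sum_congr rfl (fun Q _ => hterm Q), Finset.sum_const, smul_eq_mul]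
    rw [Finset.card_univ, ← Nat.card_eq_fintype_card, card_step P, hP]
    rfl

lemma parts_card_one {P : TreePartition n} (h : P.parts.card = 1) :
    P.parts = {Finset.univ} := by
  obtain ⟨C, hC⟩ := Finset.card_eq_one.1 h
  have hs := P.sup_parts
  rw [hC, sup_singleton, id_eq] at hs
  rw [hC, hs]

lemma F_mul : ∀ m : ℕ, F m * 2 ^ m = Nat.factorial m * Nat.factorial (m + 1) := by
  intro m
  induction m with
  | zero => simp [F]
  | succ m ih =>
    have heven : 2 ∣ (m + 2) * (m + 1) := by
      rw [mul_comm]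
      exact (Nat.even_mul_succ_self (m + 1)).two_dvd
    have hch : Nat.choose (m + 2) 2 * 2 = (m + 2) * (m + 1) := by
      rw [Nat.choose_two_right]
      simpa using Nat.div_mul_cancel heven
    calc F (m + 1) * 2 ^ (m + 1)
        = (Nat.choose (m + 2) 2 * 2) * (F m * 2 ^ m) := by rw [F]; ring
      _ = (m + 2) * (m + 1) * (Nat.factorial m * Nat.factorial (m + 1)) := by rw [hch, ih]
      _ = Nat.factorial (m + 1) * Nat.factorial (m + 2) := by
          rw [Nat.factorial_succ (m + 1), Nat.factorial_succ m]; ring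

end MergeAux

open MergeAux in
/-- The number of ranked binary tree topologies on `n` labelled leaves in which all
internal nodes have pairwise distinct ranks is `(n-1)! ⬝ n! / 2^(n-1)`. -/
theorem card_ranked_topologies (n : ℕ) (hn : 1 ≤ n) :
    Nat.card (RankedTopology n) =
      (Nat.factorial (n - 1) * Nat.factorial n) / 2 ^ (n - 1) := by
  have hcast : n - 1 + 1 = n := by omega
  have hbot : (⊥ : TreePartition n).parts.card = n := by
    rw [Finpartition.card_bot, Finset.card_univ, Fintype.card_fin]
  -- bijection between ranked topologies and chains from ⊥
  have hbij : Nat.card (RankedTopology n) = Nat.card (Chains (⊥ : TreePartition n) (n - 1)) := by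
    apply Nat.card_eq_of_bijective (fun c =>
      (⟨fun j => c.1 (Fin.cast hcast j), ?_, ?_⟩ : Chains ⊥ (n - 1)))
    · constructor
      · rintro ⟨c1, hc1⟩ ⟨c2, hc2⟩ h
        have hfun := congrArg Subtype.val h
        apply Subtype.ext
        funext i
        have := congrFun hfun (Fin.cast hcast.symm i)
        simpa using this
      · rintro ⟨d, hd0, hds⟩
        refine ⟨⟨fun i => d (Fin.cast hcast.symm i), ?_, ?_, ?_⟩, ?_⟩
        · intro j hj
          have hjz : Fin.cast hcast.symm j = 0 := by ext; simpa using hj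
          show (d (Fin.cast hcast.symm j)).parts = _
          rw [hjz, hd0, Finpartition.parts_bot, Finset.map_eq_image]
          rfl
        · intro j hj
          have hcard := chain_card ⟨d, hd0, hds⟩ (n - 1) (by omega)
          have hbc : ((⊥ : TreePartition n)).parts.card = n := hbot
          have hjj : (Fin.cast hcast.symm j) = ⟨n - 1, by omega⟩ := by ext; simpa using hj
          show (d (Fin.cast hcast.symm j)).parts = _
          rw [hjj]
          apply parts_card_one
          simp only at hcard
          omega
        · intro j hj
          have := hds (Fin.cast hcast.symm j) (by simpa using by omega)
          exact this
        · apply Subtype.ext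
          funext j
          rfl
    · -- c 0 = ⊥
      apply Finpartition.ext
      rw [c.2.1 (Fin.cast hcast 0) (by simp), Finpartition.parts_bot, Finset.map_eq_image]
      rfl
    · -- steps
      intro j hj
      exact c.2.2.2 (Fin.cast hcast j) (by simpa using by omega)
  rw [hbij, chains_card (n - 1) ⊥ (by omega)]
  have hF := F_mul (n - 1)
  rw [hcast] at hF
  rw [← hF, Nat.mul_div_cancel _ (Nat.pow_pos (by norm_num : 0 < 2))]
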